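/- Let E be a real inner product space, let v, w ∈ E, and let d ∈ [0, π) and R ∈ (0, π/2) be real numbers. Then ‖cos R · cos(d/2) · w − (1/2) sin R · sin(d/2) · v‖² / (1 − sin²R · cos²(d/2)) − (1/4)‖v‖² − cos²(d/2)·‖w‖² = −(cos⁴R · cos⁴(d/2) / (1 − sin²R · cos²(d/2))) · ‖(1/(2 cos R · cos²(d/2)))·v + (sin R · tan(d/2)/cos²R)·w‖². -/

import Mathlib

/-- The 'direct computation' identity in the proof of energy convexity for maps
into CAT(1) spaces: for vectors `v, w` in a real inner product space and `d ∈ [0,π)`,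
`R ∈ (0,π/2)`,
`‖cos R cos(d/2) w − (1/2) sin R sin(d/2) v‖²/(1 − sin²R cos²(d/2)) − (1/4)‖v‖² − cos²(d/2)‖w‖²
= −(cos⁴R cos⁴(d/2)/(1 − sin²R cos²(d/2))) ‖(1/(2 cos R cos²(d/2))) v
+ (sin R tan(d/2)/cos²R) w‖²`. -/
theorem energy_convexity_gradient_identity {E : Type*} [NormedAddCommGroup E]
    [InnerProductSpace ℝ E] (v w : E) (d R : ℝ)
    (hd : d ∈ Set.Ico 0 Real.pi) (hR : R ∈ Set.Ioo 0 (Real.pi / 2)) :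
    ‖(Real.cos R * Real.cos (d / 2)) • w
        - ((1 / 2) * Real.sin R * Real.sin (d / 2)) • v‖ ^ 2
        / (1 - Real.sin R ^ 2 * Real.cos (d / 2) ^ 2)
      - (1 / 4) * ‖v‖ ^ 2 - Real.cos (d / 2) ^ 2 * ‖w‖ ^ 2
    = -(Real.cos R ^ 4 * Real.cos (d / 2) ^ 4
          / (1 - Real.sin R ^ 2 * Real.cos (d / 2) ^ 2))
        * ‖(1 / (2 * Real.cos R * Real.cos (d / 2) ^ 2)) • v
            + (Real.sin R * Real.tan (d / 2) / Real.cos R ^ 2) • w‖ ^ 2 := by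
  obtain ⟨hd0, hdπ⟩ := hd
  obtain ⟨hR0, hRπ⟩ := hR
  have hcR : 0 < Real.cos R := Real.cos_pos_of_mem_Ioo
    ⟨by linarith [Real.pi_pos], hRπ⟩
  have hcd : 0 < Real.cos (d / 2) := Real.cos_pos_of_mem_Ioo
    ⟨by linarith [Real.pi_pos], by linarith⟩
  have hsR2 : Real.sin R ^ 2 = 1 - Real.cos R ^ 2 := by
    have := Real.sin_sq_add_cos_sq R; linarith
  have hsd2 : Real.sin (d / 2) ^ 2 = 1 - Real.cos (d / 2) ^ 2 := by
    have := Real.sin_sq_add_cos_sq (d / 2); linarith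
  have hden : 0 < 1 - Real.sin R ^ 2 * Real.cos (d / 2) ^ 2 := by
    nlinarith [Real.sin_sq_add_cos_sq R, hcR, hcd, sq_nonneg (Real.cos R * Real.cos (d/2))]
  have htan : Real.tan (d / 2) = Real.sin (d / 2) / Real.cos (d / 2) := Real.tan_eq_sin_div_cos _
  rw [norm_sub_sq_real, norm_add_sq_real]
  simp only [inner_smul_left, inner_smul_right, norm_smul, real_inner_self_eq_norm_sq,
    RCLike.conj_to_real, Real.norm_eq_abs, mul_pow, sq_abs]
  rw [htan, real_inner_comm w v]
  field_simp
  have hDinv : (1 - Real.cos (d / 2) ^ 2 * Real.sin R ^ 2) * (1 - Real.cos (d / 2) ^ 2 * Real.sin R ^ 2)⁻¹ = 1 :=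
    mul_inv_cancel₀ (by rw [mul_comm]; exact hden.ne')
  linear_combination (4 * ‖v‖ ^ 2 + 16 * Real.cos (d / 2) ^ 2 * ‖w‖ ^ 2) * hDinv
    + (4 * ‖v‖ ^ 2 + 16 * Real.cos (d / 2) ^ 2 * ‖w‖ ^ 2) * (1 - Real.cos (d / 2) ^ 2 * Real.sin R ^ 2)⁻¹
      * (hsR2 + Real.sin R ^ 2 * hsd2)
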